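/- Let K₁ be a nondegenerate triangle in ℝ², c ∈ ℝ², and let K₂ = T(K₁) be its image under the point reflection T(x) = 2c − x. For a triangle K with centroid M_K, and multi-indices α, β ∈ ℕ² with |α| = 4 and |β| = 3, set c_K^{αβ} := ∫_K ((I − Π_HHJ^K)∇²((x − M_K)^β)) : ((I − Π_HHJ^K)∇²((x − M_K)^α)) dx. Then c_{K₁}^{αβ} = −c_{K₂}^{αβ} for all such α, β. -/

import Mathlib

noncomputable section
open MeasureTheory

namespace PaperStmt

/-- Euclidean dot product on `ℝ²`. -/
def dotp (v w : ℝ × ℝ) : ℝ := v.1 * w.1 + v.2 * w.2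

/-- Euclidean length on `ℝ²`. -/
def len (v : ℝ × ℝ) : ℝ := Real.sqrt (v.1 ^ 2 + v.2 ^ 2)

/-- Cross product (determinant) of two planar vectors. -/
def crossp (v w : ℝ × ℝ) : ℝ := v.1 * w.2 - v.2 * w.1

/-- The vertices `p 0, p 1, p 2` form a nondegenerate triangle listed counterclockwise. -/
def Ccw (p : Fin 3 → ℝ × ℝ) : Prop := 0 < crossp (p 1 - p 0) (p 2 - p 0)

/-- Vector of the edge `e_i` opposite vertex `p i`, oriented counterclockwise
(from `p (i+1)` to `p (i−1)`). -/
def edgeVec (p : Fin 3 → ℝ × ℝ) (i : Fin 3) : ℝ × ℝ := p (i - 1) - p (i + 1)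

/-- Length `|e_i|` of the edge opposite vertex `p i`. -/
def elen (p : Fin 3 → ℝ × ℝ) (i : Fin 3) : ℝ := len (edgeVec p i)

/-- Unit tangent `t_i = (p_{i−1} − p_{i+1})/|e_i|` of edge `e_i`. -/
def tvec (p : Fin 3 → ℝ × ℝ) (i : Fin 3) : ℝ × ℝ := (elen p i)⁻¹ • edgeVec p i

/-- Outward unit normal `n_i` of edge `e_i` (clockwise rotation of the tangent,
which points outward for a counterclockwise triangle). -/
def nvec (p : Fin 3 → ℝ × ℝ) (i : Fin 3) : ℝ × ℝ := ((tvec p i).2, -(tvec p i).1)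

/-- Interior angle `θ_i` of the triangle at the vertex `p i`. -/
def angleAt (p : Fin 3 → ℝ × ℝ) (i : Fin 3) : ℝ :=
  Real.arccos (dotp (p (i + 1) - p i) (p (i - 1) - p i) /
    (len (p (i + 1) - p i) * len (p (i - 1) - p i)))

/-- Outer product `v wᵀ` of two planar (column) vectors, as a `2 × 2` matrix. -/
def outerProd (v w : ℝ × ℝ) : Matrix (Fin 2) (Fin 2) ℝ :=
  !![v.1 * w.1, v.1 * w.2; v.2 * w.1, v.2 * w.2]

/-- Basis matrices `φ_HHJ^i = −(1/(2 sin θ_{i−1} sin θ_{i+1})) (t_{i−1} t_{i+1}ᵀ + t_{i+1} t_{i−1}ᵀ)`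
of the lowest-order Hellan–Herrmann–Johnson element. -/
def phiHHJ (p : Fin 3 → ℝ × ℝ) (i : Fin 3) : Matrix (Fin 2) (Fin 2) ℝ :=
  (-(2 * Real.sin (angleAt p (i - 1)) * Real.sin (angleAt p (i + 1)))⁻¹) •
    (outerProd (tvec p (i - 1)) (tvec p (i + 1)) + outerProd (tvec p (i + 1)) (tvec p (i - 1)))

/-- The quadratic form `vᵀ τ v` of a `2 × 2` matrix on a planar vector. -/
def qf (τ : Matrix (Fin 2) (Fin 2) ℝ) (v : ℝ × ℝ) : ℝ :=
  v.1 * (τ 0 0 * v.1 + τ 0 1 * v.2) + v.2 * (τ 1 0 * v.1 + τ 1 1 * v.2)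

end PaperStmt

namespace PaperStmt

/-- Directional derivative of `f` along `v`. -/
def dderiv (v : ℝ × ℝ) (f : ℝ × ℝ → ℝ) : ℝ × ℝ → ℝ := fun x => fderiv ℝ f x v

/-- Second directional derivative `D²f[u, v]`. -/
def d2 (u v : ℝ × ℝ) (f : ℝ × ℝ → ℝ) : ℝ × ℝ → ℝ := dderiv u (dderiv v f)

/-- Third directional derivative `D³f[u, v, w]`. -/
def d3 (u v w : ℝ × ℝ) (f : ℝ × ℝ → ℝ) : ℝ × ℝ → ℝ := dderiv u (dderiv v (dderiv w f))

end PaperStmt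

namespace PaperStmt

/-- Area `|K|` of the (counterclockwise) triangle with vertices `p`. -/
def area (p : Fin 3 → ℝ × ℝ) : ℝ := crossp (p 1 - p 0) (p 2 - p 0) / 2

/-- Centroid `M_K` of the triangle with vertices `p`. -/
def centroid (p : Fin 3 → ℝ × ℝ) : ℝ × ℝ := (3 : ℝ)⁻¹ • (p 0 + p 1 + p 2)

/-- The (closed) triangle `K` with vertices `p`, as a subset of `ℝ²`. -/
def tri (p : Fin 3 → ℝ × ℝ) : Set (ℝ × ℝ) := convexHull ℝ {p 0, p 1, p 2}

/-- The cubic polynomials `φ₁, φ₂, φ₃, φ₄` centered at the centroid: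
`φ₁ = (x₁−M₁)³/(6|K|^{1/2})`, `φ₂ = (x₁−M₁)²(x₂−M₂)/(2|K|^{1/2})`,
`φ₃ = (x₁−M₁)(x₂−M₂)²/(2|K|^{1/2})`, `φ₄ = (x₂−M₂)³/(6|K|^{1/2})`. -/
def phiK (p : Fin 3 → ℝ × ℝ) : Fin 4 → ℝ × ℝ → ℝ :=
  ![fun x => (x.1 - (centroid p).1) ^ 3 / (6 * Real.sqrt (area p)),
    fun x => (x.1 - (centroid p).1) ^ 2 * (x.2 - (centroid p).2) / (2 * Real.sqrt (area p)),
    fun x => (x.1 - (centroid p).1) * (x.2 - (centroid p).2) ^ 2 / (2 * Real.sqrt (area p)),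
    fun x => (x.2 - (centroid p).2) ^ 3 / (6 * Real.sqrt (area p))]

/-- Hessian `∇²f` of a scalar function on `ℝ²`, as a `2 × 2` matrix field. -/
def hess (f : ℝ × ℝ → ℝ) (x : ℝ × ℝ) : Matrix (Fin 2) (Fin 2) ℝ :=
  !![d2 (1, 0) (1, 0) f x, d2 (1, 0) (0, 1) f x;
     d2 (0, 1) (1, 0) f x, d2 (0, 1) (0, 1) f x]

/-- Frobenius inner product `A : B` of two `2 × 2` matrices. -/
def frob (A B : Matrix (Fin 2) (Fin 2) ℝ) : ℝ := ∑ i : Fin 2, ∑ j : Fin 2, A i j * B i j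

/-- Mean value `(1/|e_j|) ∫_{e_j} g ds` of `g` over the edge `e_j` (with respect to
arclength measure), computed by the unit-speed-normalized parametrization of `e_j`. -/
def edgeAvg (p : Fin 3 → ℝ × ℝ) (j : Fin 3) (g : ℝ × ℝ → ℝ) : ℝ :=
  ∫ s in (0:ℝ)..1, g (p (j + 1) + s • (p (j - 1) - p (j + 1)))

/-- The Hellan–Herrmann–Johnson interpolant
`Π_HHJ τ = Σ_{j=1}^{3} ((1/|e_j|) ∫_{e_j} n_jᵀ τ n_j ds) φ_HHJ^j` of a
matrix-valued field `τ`, a constant symmetric matrix. -/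
def PiHHJ (p : Fin 3 → ℝ × ℝ) (τ : ℝ × ℝ → Matrix (Fin 2) (Fin 2) ℝ) :
    Matrix (Fin 2) (Fin 2) ℝ :=
  ∑ j : Fin 3, edgeAvg p j (fun x => qf (τ x) (nvec p j)) • phiHHJ p j

/-- The constants `γ^{ij} = (1/|K|) ∫_K ((I − Π_HHJ)∇²φ_i) : ((I − Π_HHJ)∇²φ_j) dx`. -/
def gammaHHJ (p : Fin 3 → ℝ × ℝ) (i j : Fin 4) : ℝ :=
  (area p)⁻¹ *
    ∫ x in tri p,
      frob (hess (phiK p i) x - PiHHJ p (hess (phiK p i)))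
           (hess (phiK p j) x - PiHHJ p (hess (phiK p j)))

/-- Coefficients `a₁ = |K|^{1/2} ∂³w/∂x₁³`, `a₂ = |K|^{1/2} ∂³w/∂x₁²∂x₂`,
`a₃ = |K|^{1/2} ∂³w/∂x₁∂x₂²`, `a₄ = |K|^{1/2} ∂³w/∂x₂³` (the third partial
derivatives of a cubic polynomial being constant, they are evaluated at `0`). -/
def acoef (p : Fin 3 → ℝ × ℝ) (w : ℝ × ℝ → ℝ) : Fin 4 → ℝ :=
  ![Real.sqrt (area p) * d3 (1, 0) (1, 0) (1, 0) w 0,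
    Real.sqrt (area p) * d3 (1, 0) (1, 0) (0, 1) w 0,
    Real.sqrt (area p) * d3 (1, 0) (0, 1) (0, 1) w 0,
    Real.sqrt (area p) * d3 (0, 1) (0, 1) (0, 1) w 0]

end PaperStmt

namespace PaperStmt

/-- Centered monomial `(x − M_K)^α` on the triangle with vertices `p`. -/
def monoC (p : Fin 3 → ℝ × ℝ) (α : ℕ × ℕ) : ℝ × ℝ → ℝ :=
  fun x => (x.1 - (centroid p).1) ^ α.1 * (x.2 - (centroid p).2) ^ α.2

/-- `c_K^{αβ} = ∫_K ((I − Π_HHJ)∇²((x − M_K)^β)) : ((I − Π_HHJ)∇²((x − M_K)^α)) dx`. -/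
def cKab (p : Fin 3 → ℝ × ℝ) (α β : ℕ × ℕ) : ℝ :=
  ∫ x in tri p,
    frob (hess (monoC p β) x - PiHHJ p (hess (monoC p β)))
         (hess (monoC p α) x - PiHHJ p (hess (monoC p α)))

end PaperStmt


namespace PaperStmt2
open PaperStmt

/-! ### Calculus lemmas -/

lemma dderiv_contDiff {f : ℝ × ℝ → ℝ} (hf : ContDiff ℝ (⊤:ℕ∞) f) (v : ℝ × ℝ) :
    ContDiff ℝ (⊤:ℕ∞) (dderiv v f) := by
  have h := (contDiff_infty_iff_fderiv.mp hf).2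
  exact h.clm_apply contDiff_const

lemma dderiv_const_mul' {f : ℝ × ℝ → ℝ} (hf : Differentiable ℝ f) (k : ℝ) (v : ℝ × ℝ) :
    dderiv v (fun x => k * f x) = fun x => k * dderiv v f x := by
  funext x
  unfold dderiv
  rw [fderiv_const_mul (hf x) k]; simp

lemma dderiv_reflect {f : ℝ × ℝ → ℝ} (hf : Differentiable ℝ f) (a : ℝ × ℝ) (v : ℝ × ℝ) :
    dderiv v (fun x => f (a - x)) = fun x => -dderiv v f (a - x) := by
  funext x
  unfold dderiv
  have h1 : HasFDerivAt (fun y : ℝ×ℝ => a - y) (-(ContinuousLinearMap.id ℝ (ℝ×ℝ))) x :=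
    (hasFDerivAt_id x).const_sub a
  have h2 := ((hf (a - x)).hasFDerivAt).comp x h1
  have h3 : fderiv ℝ (fun y : ℝ×ℝ => f (a - y)) x
      = (fderiv ℝ f (a-x)).comp (-(ContinuousLinearMap.id ℝ (ℝ×ℝ))) := h2.fderiv
  rw [h3]; simp

lemma d2_reflect {f : ℝ × ℝ → ℝ} (hf : ContDiff ℝ (⊤:ℕ∞) f) (k : ℝ) (a u v x : ℝ × ℝ) :
    d2 u v (fun y => k * f (a - y)) x = k * d2 u v f (a - x) := by
  have hfd : Differentiable ℝ f := hf.differentiable (by simp)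
  have hT : Differentiable ℝ (fun y : ℝ×ℝ => a - y) :=
    (differentiable_const a).sub differentiable_id
  have hcomp : Differentiable ℝ (fun y : ℝ×ℝ => f (a - y)) := hfd.comp hT
  have hdd : Differentiable ℝ (dderiv v f) := (dderiv_contDiff hf v).differentiable (by simp)
  have hddc : Differentiable ℝ (fun y : ℝ×ℝ => dderiv v f (a - y)) := hdd.comp hT
  unfold d2
  rw [dderiv_const_mul' hcomp k v, show (fun x => k * dderiv v (fun y => f (a - y)) x)
      = fun x => (-k) * dderiv v f (a - x) by rw [dderiv_reflect hfd a v]; funext x; ring,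
    dderiv_const_mul' hddc (-k) u, dderiv_reflect hdd a u]
  ring

lemma hess_reflect {f : ℝ × ℝ → ℝ} (hf : ContDiff ℝ (⊤:ℕ∞) f) (k : ℝ) (a x : ℝ × ℝ) :
    hess (fun y => k * f (a - y)) x = k • hess f (a - x) := by
  unfold hess
  ext i j
  fin_cases i <;> fin_cases j <;>
    simp [d2_reflect hf, Matrix.smul_apply]

lemma contDiff_monoC (p : Fin 3 → ℝ × ℝ) (α : ℕ × ℕ) : ContDiff ℝ (⊤:ℕ∞) (monoC p α) :=
  ((contDiff_fst.sub contDiff_const).pow _).mul ((contDiff_snd.sub contDiff_const).pow _)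

/-! ### Geometry of the reflected triangle -/

variable (p : Fin 3 → ℝ × ℝ) (c : ℝ × ℝ)

lemma len_neg (v : ℝ × ℝ) : len (-v) = len v := by
  simp [len, neg_sq]

lemma dotp_neg_neg (u v : ℝ × ℝ) : dotp (-u) (-v) = dotp u v := by
  simp [dotp]

lemma edgeVec_refl (i : Fin 3) :
    edgeVec (fun k => (2:ℝ) • c - p k) i = -edgeVec p i := by
  simp only [edgeVec]; abel

lemma elen_refl (i : Fin 3) : elen (fun k => (2:ℝ) • c - p k) i = elen p i := by
  rw [elen, elen, edgeVec_refl, len_neg]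

lemma tvec_refl (i : Fin 3) : tvec (fun k => (2:ℝ) • c - p k) i = -tvec p i := by
  rw [tvec, tvec, edgeVec_refl, elen_refl, smul_neg]

lemma nvec_refl (i : Fin 3) : nvec (fun k => (2:ℝ) • c - p k) i = -nvec p i := by
  rw [nvec, nvec, tvec_refl]
  simp [Prod.ext_iff]

lemma angleAt_refl (i : Fin 3) : angleAt (fun k => (2:ℝ) • c - p k) i = angleAt p i := by
  unfold angleAt
  have h : ∀ a b : Fin 3, ((2:ℝ) • c - p a) - ((2:ℝ) • c - p b) = -(p a - p b) := by
    intro a b; abel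
  rw [h, h, dotp_neg_neg, len_neg, len_neg]

lemma outerProd_neg_neg (u v : ℝ × ℝ) : outerProd (-u) (-v) = outerProd u v := by
  simp [outerProd]

lemma phiHHJ_refl (i : Fin 3) : phiHHJ (fun k => (2:ℝ) • c - p k) i = phiHHJ p i := by
  rw [phiHHJ, phiHHJ, angleAt_refl, angleAt_refl, tvec_refl, tvec_refl,
    outerProd_neg_neg, outerProd_neg_neg]

lemma edgeAvg_refl (j : Fin 3) (g : ℝ × ℝ → ℝ) :
    edgeAvg (fun k => (2:ℝ) • c - p k) j g = edgeAvg p j (fun y => g ((2:ℝ) • c - y)) := by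
  unfold edgeAvg
  refine intervalIntegral.integral_congr fun s _ => ?_
  congr 1
  have : ((2:ℝ) • c - p (j - 1)) - ((2:ℝ) • c - p (j + 1)) = -(p (j - 1) - p (j + 1)) := by abel
  rw [this, smul_neg]
  simp only [sub_eq_add_neg, neg_add, add_assoc]

lemma edgeAvg_const_mul (j : Fin 3) (k : ℝ) (g : ℝ × ℝ → ℝ) :
    edgeAvg p j (fun y => k * g y) = k * edgeAvg p j g := by
  unfold edgeAvg
  exact intervalIntegral.integral_const_mul k _

lemma qf_neg (A : Matrix (Fin 2) (Fin 2) ℝ) (v : ℝ × ℝ) : qf A (-v) = qf A v := by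
  simp [qf]; ring

lemma qf_smul (k : ℝ) (A : Matrix (Fin 2) (Fin 2) ℝ) (v : ℝ × ℝ) :
    qf (k • A) v = k * qf A v := by
  simp [qf, Matrix.smul_apply, smul_eq_mul]; ring

lemma frob_smul_smul (s t : ℝ) (A B : Matrix (Fin 2) (Fin 2) ℝ) :
    frob (s • A) (t • B) = s * t * frob A B := by
  simp [frob, Fin.sum_univ_two, Matrix.smul_apply, smul_eq_mul]; ring

lemma centroid_refl : centroid (fun k => (2:ℝ) • c - p k) = (2:ℝ) • c - centroid p := by
  unfold centroid
  apply Prod.ext <;> simp [Prod.smul_fst, Prod.smul_snd] <;> ring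

lemma twoc_cancel (y : ℝ × ℝ) : (2:ℝ) • c - ((2:ℝ) • c - y) = y := by abel

lemma monoC_refl (α : ℕ × ℕ) :
    monoC (fun k => (2:ℝ) • c - p k) α
      = fun x => ((-1:ℝ)) ^ (α.1 + α.2) * monoC p α ((2:ℝ) • c - x) := by
  funext x
  have h1 : x.1 - (centroid (fun k => (2:ℝ) • c - p k)).1
      = -((((2:ℝ) • c - x)).1 - (centroid p).1) := by
    rw [centroid_refl]; simp; ring
  have h2 : x.2 - (centroid (fun k => (2:ℝ) • c - p k)).2
      = -((((2:ℝ) • c - x)).2 - (centroid p).2) := by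
    rw [centroid_refl]; simp; ring
  rw [monoC, monoC, h1, h2,
    neg_pow ((((2:ℝ) • c - x)).1 - (centroid p).1) α.1,
    neg_pow ((((2:ℝ) • c - x)).2 - (centroid p).2) α.2, pow_add]
  ring

lemma hess_monoC_refl (α : ℕ × ℕ) (x : ℝ × ℝ) :
    hess (monoC (fun k => (2:ℝ) • c - p k) α) x
      = ((-1:ℝ)) ^ (α.1 + α.2) • hess (monoC p α) ((2:ℝ) • c - x) := by
  rw [monoC_refl]
  exact hess_reflect (contDiff_monoC p α) _ _ _

lemma PiHHJ_refl (α : ℕ × ℕ) :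
    PiHHJ (fun k => (2:ℝ) • c - p k) (hess (monoC (fun k => (2:ℝ) • c - p k) α))
      = ((-1:ℝ)) ^ (α.1 + α.2) • PiHHJ p (hess (monoC p α)) := by
  unfold PiHHJ
  rw [Finset.smul_sum]
  refine Finset.sum_congr rfl fun j _ => ?_
  rw [phiHHJ_refl, smul_smul, edgeAvg_refl]
  congr 1
  have : (fun y => qf (hess (monoC (fun k => (2:ℝ) • c - p k) α) ((2:ℝ) • c - y))
      (nvec (fun k => (2:ℝ) • c - p k) j))
      = fun y => ((-1:ℝ)) ^ (α.1 + α.2) * qf (hess (monoC p α) y) (nvec p j) := by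
    funext y
    rw [hess_monoC_refl, twoc_cancel, nvec_refl, qf_neg, qf_smul]
  rw [this, edgeAvg_const_mul]

lemma tri_refl : tri (fun k => (2:ℝ) • c - p k)
    = (fun x => (2:ℝ) • c - x) '' tri p := by
  have hT : ∃ f : (ℝ×ℝ) →ᵃ[ℝ] (ℝ×ℝ), ⇑f = fun x => (2:ℝ) • c - x :=
    ⟨AffineMap.const ℝ (ℝ×ℝ) ((2:ℝ)•c) - AffineMap.id ℝ (ℝ×ℝ), by funext x; simp⟩
  obtain ⟨f, hf⟩ := hT
  rw [← hf]
  unfold tri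
  rw [f.image_convexHull]
  congr 1
  rw [hf]
  simp [Set.image_insert_eq]

lemma cKab_refl (α β : ℕ × ℕ) (hα : α.1 + α.2 = 4) (hβ : β.1 + β.2 = 3) :
    cKab (fun k => (2:ℝ) • c - p k) α β = -cKab p α β := by
  have hmp : MeasurePreserving (fun x : ℝ×ℝ => (2:ℝ)•c - x) volume volume :=
    Measure.measurePreserving_sub_left volume ((2:ℝ)•c)
  have hemb : MeasurableEmbedding (fun x : ℝ×ℝ => (2:ℝ)•c - x) :=
    (Homeomorph.subLeft ((2:ℝ)•c)).measurableEmbedding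
  unfold cKab
  rw [tri_refl, hmp.setIntegral_image_emb hemb, ← integral_neg]
  refine integral_congr_ae (Filter.Eventually.of_forall fun x => ?_)
  beta_reduce
  rw [hess_monoC_refl, hess_monoC_refl, twoc_cancel, PiHHJ_refl, PiHHJ_refl,
    ← smul_sub, ← smul_sub, frob_smul_smul, hα, hβ]
  ring

end PaperStmt2

open PaperStmt in
/-- Under the point reflection `T(x) = 2c − x` mapping the triangle `K₁` onto `K₂`, the
quantities `c_K^{αβ}` with `|α| = 4`, `|β| = 3` change sign: `c_{K₁}^{αβ} = −c_{K₂}^{αβ}`. -/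
theorem cKab_point_reflection_antisymm
    (p : Fin 3 → ℝ × ℝ) (hp : Ccw p) (c : ℝ × ℝ)
    (α β : ℕ × ℕ) (hα : α.1 + α.2 = 4) (hβ : β.1 + β.2 = 3) :
    cKab p α β = -cKab (fun k => (2 : ℝ) • c - p k) α β := by
  rw [PaperStmt2.cKab_refl p c α β hα hβ, neg_neg]
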